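/- Let p be an odd prime, q = p^n, and let m divide q − 1. Regard V = 𝔽_q as an n-dimensional vector space over 𝔽_p. Suppose there exist 𝔽_p-subspaces V₁, …, V_s of V with s ≥ 2, each Vᵢ ≠ 0, such that V = V₁ ⊕ ⋯ ⊕ V_s and for every α ∈ S_{q,m} and every i ∈ {1, …, s} there is j ∈ {1, …, s} with Vᵢ·α = Vⱼ (i.e., the multiplication maps by elements of S_{q,m} permute the subspaces V₁, …, V_s). Then G_{q,m} is non-synchronizing. -/

import Mathlib

/-- A section of a partition: a set containing exactly one element of each part. -/
def IsSection {Ω : Type*} (P : Set (Set Ω)) (S : Set Ω) : Prop :=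
  ∀ B ∈ P, ∃! x, x ∈ S ∧ x ∈ B

/-- A partition is `G`-regular if it admits a section `S` such that `Sg` is a
section for every `g ∈ G`. -/
def IsGRegular {Ω : Type*} (G : Subgroup (Equiv.Perm Ω)) (P : Set (Set Ω)) : Prop :=
  ∃ S : Set Ω, IsSection P S ∧ ∀ g ∈ G, IsSection P ((⇑g) '' S)

/-- The trivial partitions: the one-block partition and the partition into singletons. -/
def IsTrivialPartition {Ω : Type*} (P : Set (Set Ω)) : Prop :=
  P = {Set.univ} ∨ P = Set.range (fun x : Ω => ({x} : Set Ω))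

/-- A permutation group is transitive if any point can be mapped to any other. -/
def IsTransitivePermGroup {Ω : Type*} (G : Subgroup (Equiv.Perm Ω)) : Prop :=
  ∀ a b : Ω, ∃ g ∈ G, g a = b

/-- A partition is `G`-invariant if `G` permutes its parts. -/
def IsInvariantPartition {Ω : Type*} (G : Subgroup (Equiv.Perm Ω)) (P : Set (Set Ω)) : Prop :=
  ∀ g ∈ G, ∀ B ∈ P, (⇑g) '' B ∈ P

/-- A permutation group is primitive if it is transitive and preserves no
non-trivial partition. -/
def IsPrimitivePermGroup {Ω : Type*} (G : Subgroup (Equiv.Perm Ω)) : Prop :=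
  IsTransitivePermGroup G ∧
    ∀ P : Set (Set Ω), Setoid.IsPartition P → IsInvariantPartition G P → IsTrivialPartition P

/-- A permutation group is synchronizing if it is non-trivial and its only
`G`-regular partitions are the trivial ones. -/
def IsSynchronizing {Ω : Type*} (G : Subgroup (Equiv.Perm Ω)) : Prop :=
  G ≠ ⊥ ∧ ∀ P : Set (Set Ω), Setoid.IsPartition P → IsGRegular G P → IsTrivialPartition P

/-- The set `S_{q,m}` of `m`-th powers of nonzero elements of a field. -/
def mthPowers (F : Type*) [Field F] (m : ℕ) : Set F :=
  {x : F | ∃ a : F, a ≠ 0 ∧ a ^ m = x}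

/-- The group `G_{q,m} ≤ Sym(F)`, generated by all translations `x ↦ x + α` and the
multiplications `x ↦ x * α` for `α ∈ S_{q,m}`. -/
def Gqm (F : Type*) [Field F] (m : ℕ) : Subgroup (Equiv.Perm F) :=
  Subgroup.closure
    ((Set.range fun a : F => Equiv.addRight a) ∪
      {e : Equiv.Perm F | ∃ (a : F) (ha : a ≠ 0), a ∈ mthPowers F m ∧ e = Equiv.mulRight₀ a ha})

open scoped DirectSum
set_option maxHeartbeats 1000000

section Aux

variable {F : Type*} [Field F] {m : ℕ}

lemma mthPowers_one_mem : (1 : F) ∈ mthPowers F m := ⟨1, one_ne_zero, one_pow m⟩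

lemma mthPowers_ne_zero {α : F} (h : α ∈ mthPowers F m) : α ≠ 0 := by
  obtain ⟨a, ha, rfl⟩ := h; exact pow_ne_zero m ha

lemma mthPowers_mul_mem {α β : F} (hα : α ∈ mthPowers F m) (hβ : β ∈ mthPowers F m) :
    α * β ∈ mthPowers F m := by
  obtain ⟨a, ha, rfl⟩ := hα; obtain ⟨b, hb, rfl⟩ := hβ
  exact ⟨a * b, mul_ne_zero ha hb, (mul_pow a b m)⟩

lemma mthPowers_inv_mem {α : F} (hα : α ∈ mthPowers F m) : α⁻¹ ∈ mthPowers F m := by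
  obtain ⟨a, ha, rfl⟩ := hα
  exact ⟨a⁻¹, inv_ne_zero ha, (inv_pow a m).symm ▸ rfl⟩

lemma gqm_affine (m : ℕ) :
    ∀ g ∈ Gqm F m, ∃ α ∈ mthPowers F m, ∃ c : F, ∀ x, g x = x * α + c := by
  set H : Subgroup (Equiv.Perm F) :=
  { carrier := {e | ∃ α ∈ mthPowers F m, ∃ c : F, ∀ x, e x = x * α + c}
    one_mem' := ⟨1, mthPowers_one_mem, 0, fun x => by simp⟩
    mul_mem' := by
      rintro g h ⟨α, hα, c, hg⟩ ⟨β, hβ, d, hh⟩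
      refine ⟨β * α, mthPowers_mul_mem hβ hα, d * α + c, fun x => ?_⟩
      simp only [Equiv.Perm.mul_apply, hg, hh]
      ring
    inv_mem' := by
      rintro g ⟨α, hα, c, hg⟩
      have hα0 : α ≠ 0 := mthPowers_ne_zero hα
      refine ⟨α⁻¹, mthPowers_inv_mem hα, -c * α⁻¹, fun x => ?_⟩
      have key : g (x * α⁻¹ + -c * α⁻¹) = x := by
        rw [hg]; field_simp; ring
      calc g⁻¹ x = g⁻¹ (g (x * α⁻¹ + -c * α⁻¹)) := by rw [key]
        _ = x * α⁻¹ + -c * α⁻¹ := by simp }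
  intro g hg
  have : Gqm F m ≤ H := by
    rw [Gqm, Subgroup.closure_le]
    rintro e (⟨a, rfl⟩ | ⟨a, ha, haS, rfl⟩)
    · exact ⟨1, mthPowers_one_mem, a, fun x => by simp⟩
    · exact ⟨a, haS, 0, fun x => by simp⟩
  exact this hg

end Aux

/-- If `Z_{q,m}` is an imprimitive linear group, i.e. the multiplications by elements
of `S_{q,m}` permute the summands of a direct sum decomposition of `F_q` (as a vector
space over the prime field, equivalently into additive subgroups), then `G_{q,m}` is
non-synchronizing. -/
theorem stmt17 (p n q m : ℕ) (hp : p.Prime) (hpodd : Odd p) (hq : q = p ^ n)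
    (hm : m ∣ q - 1)
    (F : Type*) [Field F] [Fintype F] (hF : Fintype.card F = q)
    (s : ℕ) (hs : 2 ≤ s) (V : Fin s → AddSubgroup F)
    (hne : ∀ i, V i ≠ ⊥) (hdirect : DirectSum.IsInternal V)
    (hperm : ∀ α ∈ mthPowers F m, ∀ i : Fin s, ∃ j : Fin s,
      (V i).map (AddMonoidHom.mulRight α) = V j) :
    ¬ IsSynchronizing (Gqm F m) := by
  classical
  rintro ⟨-, hsync⟩
  set i0 : Fin s := ⟨0, by omega⟩ with hi0
  set i1 : Fin s := ⟨1, by omega⟩ with hi1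
  have hi01 : i0 ≠ i1 := by simp [hi0, hi1, Fin.ext_iff]
  set A : AddSubgroup F := V i0 with hA
  -- the decomposition equivalence
  set e : (⨁ j, V j) ≃+ F := AddEquiv.ofBijective (DirectSum.coeAddMonoidHom V) hdirect with he
  have he_apply : ∀ f : ⨁ j, V j, e f = DirectSum.coeAddMonoidHom V f := fun f => rfl
  have hof : ∀ (j : Fin s) (v : V j), e.symm (v : F) = DirectSum.of (fun j => V j) j v := by
    intro j v
    rw [AddEquiv.symm_apply_eq, he_apply, DirectSum.coeAddMonoidHom_of]
  -- the predicate "V j is in the S_{q,m}-orbit of A"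
  set Pred : Fin s → Prop := fun j => ∃ β ∈ mthPowers F m,
      A.map (AddMonoidHom.mulRight β) = V j with hPred
  set c : Fin s → F := fun j => if h : Pred j then (h.choose)⁻¹ else 0 with hc
  have hcpos : ∀ j, Pred j → c j ≠ 0 ∧ (V j).map (AddMonoidHom.mulRight (c j)) = A := by
    intro j hj
    obtain ⟨hβS, hβmap⟩ := hj.choose_spec
    set β := hj.choose
    have hβ0 : β ≠ 0 := mthPowers_ne_zero hβS
    have hcj : c j = β⁻¹ := by rw [hc]; exact dif_pos hj
    constructor
    · rw [hcj]; exact inv_ne_zero hβ0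
    · rw [hcj, ← hβmap, AddSubgroup.map_map]
      ext x
      simp only [AddSubgroup.mem_map, AddMonoidHom.coe_comp, Function.comp_apply,
        AddMonoidHom.coe_mulRight]
      constructor
      · rintro ⟨a, ha, rfl⟩
        rwa [mul_assoc, mul_inv_cancel₀ hβ0, mul_one]
      · intro hx
        exact ⟨x, hx, by rw [mul_assoc, mul_inv_cancel₀ hβ0, mul_one]⟩
  have hc0 : ∀ j, ¬ Pred j → c j = 0 := fun j hj => by rw [hc]; exact dif_neg hj
  -- the retraction φ
  set φ : F → F := fun x => ∑ j, ((e.symm x j : F) * c j) with hφ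
  have hφsub : ∀ x y, φ (x - y) = φ x - φ y := by
    intro x y
    simp only [hφ, map_sub, DirectSum.sub_apply, AddSubgroup.coe_sub, sub_mul]
    rw [Finset.sum_sub_distrib]
  have hφv : ∀ (j : Fin s) (v : F), v ∈ V j → φ v = v * c j := by
    intro j v hv
    have : e.symm v = DirectSum.of (fun j => V j) j ⟨v, hv⟩ := hof j ⟨v, hv⟩
    rw [hφ]
    simp only [this]
    rw [Finset.sum_eq_single j]
    · rw [DirectSum.of_eq_same]
    · intro b _ hb
      rw [DirectSum.of_eq_of_ne _ _ _ hb]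
      simp
    · intro h; exact absurd (Finset.mem_univ j) h
  have hφA : ∀ x, φ x ∈ A := by
    intro x
    apply A.sum_mem
    intro j _
    by_cases hj : Pred j
    · rw [← (hcpos j hj).2]
      exact ⟨e.symm x j, (e.symm x j).2, rfl⟩
    · rw [hc0 j hj, mul_zero]; exact A.zero_mem
  -- key uniqueness lemma
  have hkey : ∀ j, Pred j → ∀ t : F, ∃! y : F, φ y = 0 ∧ y - t ∈ V j := by
    intro j hj t
    obtain ⟨hcne, hcmap⟩ := hcpos j hj
    have h1 : φ t ∈ (V j).map (AddMonoidHom.mulRight (c j)) := hcmap.symm ▸ hφA t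
    obtain ⟨v, hv, hveq⟩ := h1
    have hveq' : v * c j = φ t := hveq
    have hφtv : φ (t - v) = 0 := by
      rw [hφsub, hφv j v hv, ← hveq', sub_self]
    refine ⟨t - v, ⟨hφtv, by simpa using (V j).neg_mem hv⟩, ?_⟩
    rintro y ⟨hy0, hyt⟩
    have hd : y - (t - v) ∈ V j := by
      have : y - (t - v) = (y - t) + v := by ring
      rw [this]; exact (V j).add_mem hyt hv
    have hz : φ (y - (t - v)) = 0 := by rw [hφsub, hy0, hφtv, sub_zero]
    rw [hφv j _ hd] at hz
    have := (mul_eq_zero.mp hz).resolve_right hcne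
    linear_combination this
  have hPredi0 : Pred i0 := by
    refine ⟨1, mthPowers_one_mem, ?_⟩
    ext x
    simp [AddSubgroup.mem_map]; exact Iff.rfl
  -- the partition and section
  set S : Set F := {x | φ x = 0} with hS
  set P : Set (Set F) := Set.range (fun x : F => {y : F | y - x ∈ A}) with hP
  have hmemP : ∀ x : F, x ∈ {y : F | y - x ∈ A} := fun x => by simp [A.zero_mem]
  have hpart : Setoid.IsPartition P := by
    constructor
    · rintro ⟨x, hx⟩
      have hx' : {y : F | y - x ∈ A} = ∅ := hx
      exact absurd (hx' ▸ hmemP x) (Set.notMem_empty x)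
    · intro a
      refine ⟨{y | y - a ∈ A}, ⟨⟨a, rfl⟩, hmemP a⟩, ?_⟩
      rintro b ⟨⟨x, rfl⟩, hab⟩
      have hax : a - x ∈ A := hab
      ext y
      simp only [Set.mem_setOf_eq]
      constructor
      · intro h
        have := A.sub_mem h hax
        rwa [show y - x - (a - x) = y - a by ring] at this
      · intro h
        have := A.add_mem h hax
        rwa [show y - a + (a - x) = y - x by ring] at this
  have hsec : ∀ j, Pred j → ∀ α c' : F, α ≠ 0 →
      A.map (AddMonoidHom.mulRight α⁻¹) = V j →
      ∀ x : F, ∃! y, (∃ u ∈ S, u * α + c' = y) ∧ y ∈ {y : F | y - x ∈ A} := by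
    intro j hj α c' hα0 hmap x
    obtain ⟨y0, ⟨hy0S, hy0V⟩, huniq⟩ := hkey j hj ((x - c') * α⁻¹)
    refine ⟨y0 * α + c', ⟨⟨y0, hy0S, rfl⟩, ?_⟩, ?_⟩
    · rw [← hmap] at hy0V
      obtain ⟨a, ha, haeq⟩ := hy0V
      have haeq' : a * α⁻¹ = y0 - (x - c') * α⁻¹ := haeq
      have : y0 * α + c' - x = a := by
        field_simp at haeq'
        linear_combination -haeq'
      show y0 * α + c' - x ∈ A
      rw [this]; exact ha
    · rintro y ⟨⟨u, huS, rfl⟩, hyA⟩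
      have hyA' : u * α + c' - x ∈ A := hyA
      have hmem : (u * α + c' - x) * α⁻¹ ∈ V j := hmap ▸ ⟨_, hyA', rfl⟩
      have heq : (u * α + c' - x) * α⁻¹ = u - (x - c') * α⁻¹ := by field_simp; ring
      rw [heq] at hmem
      rw [huniq u ⟨huS, hmem⟩]
  have hreg : IsGRegular (Gqm F m) P := by
    refine ⟨S, ?_, ?_⟩
    · rintro B ⟨x, rfl⟩
      have h1 : A.map (AddMonoidHom.mulRight (1 : F)⁻¹) = V i0 := by
        ext z; simp [AddSubgroup.mem_map]; exact Iff.rfl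
      obtain ⟨y, ⟨⟨u, huS, huy⟩, hyB⟩, hyu⟩ := hsec i0 hPredi0 1 0 one_ne_zero h1 x
      have huy' : u = y := by linear_combination huy
      refine ⟨y, ⟨huy' ▸ huS, hyB⟩, ?_⟩
      · rintro z ⟨hzS, hzB⟩
        exact hyu z ⟨⟨z, hzS, by ring⟩, hzB⟩
    · intro g hg
      obtain ⟨α, hαS, c', hgx⟩ := gqm_affine m g hg
      have hα0 : α ≠ 0 := mthPowers_ne_zero hαS
      have hαinv : α⁻¹ ∈ mthPowers F m := mthPowers_inv_mem hαS
      obtain ⟨j, hj⟩ := hperm α⁻¹ hαinv i0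
      have hPj : Pred j := ⟨α⁻¹, hαinv, hj⟩
      rintro B ⟨x, rfl⟩
      obtain ⟨y, ⟨⟨u, huS, huy⟩, hyB⟩, hyu⟩ := hsec j hPj α c' hα0 hj x
      refine ⟨y, ⟨⟨u, huS, by rw [hgx u, huy]⟩, hyB⟩, ?_⟩
      rintro z ⟨⟨w, hwS, hwz⟩, hzB⟩
      exact hyu z ⟨⟨w, hwS, by rw [← hwz, hgx w]⟩, hzB⟩
  -- the partition is non-trivial: derive contradiction
  have hAinP : (A : Set F) ∈ P := ⟨0, by ext y; simp⟩
  obtain ⟨v1, hv1⟩ := AddSubgroup.ne_bot_iff_exists_ne_zero.mp (hne i1)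
  obtain ⟨v0, hv0⟩ := AddSubgroup.ne_bot_iff_exists_ne_zero.mp (hne i0)
  rcases hsync P hpart hreg with h | h
  · rw [h] at hAinP
    have hAuniv : (A : Set F) = Set.univ := by simpa using hAinP
    have hv1A : (v1 : F) ∈ A := Set.eq_univ_iff_forall.mp hAuniv _
    have h1 := hof i0 ⟨(v1 : F), hv1A⟩
    have h2 := hof i1 v1
    have h3 : (DirectSum.of (fun j => ↥(V j)) i0) ⟨(v1 : F), hv1A⟩
        = (DirectSum.of (fun j => ↥(V j)) i1) v1 := h1.symm.trans h2
    have h4 := congrArg (fun f => ((f i0 : V i0) : F)) h3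
    simp only [DirectSum.of_eq_same, DirectSum.of_eq_of_ne _ _ _ hi01] at h4
    have : (v1 : F) = 0 := by simpa using h4
    exact hv1 (Subtype.ext this)
  · rw [h] at hAinP
    obtain ⟨x, hx⟩ := hAinP
    have hx' : ({x} : Set F) = (A : Set F) := hx
    have h0 : (0 : F) ∈ ({x} : Set F) := by rw [hx']; exact A.zero_mem
    have hv : (v0 : F) ∈ ({x} : Set F) := by rw [hx']; exact v0.property
    simp only [Set.mem_singleton_iff] at h0 hv
    exact hv0 (Subtype.ext (by rw [hv, ← h0] : (v0 : F) = 0))
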